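/- Let ε* = ln( (−5 + 2·(6353 − 405√241)^{1/3} + 2·(6353 + 405√241)^{1/3}) / 27 ), and define α*(ε) = 1 − e^{−ε/2} if ε > ε* and α*(ε) = 0 if 0 < ε ≤ ε*. Then for every ε > 0, α = α*(ε) minimizes the worst-case noise variance of the Hybrid Mechanism: for every α ∈ [0,1], max_{t ∈ [−1,1]} σ²_H(t, ε, α*(ε)) ≤ max_{t ∈ [−1,1]} σ²_H(t, ε, α). -/

import Mathlib

open Real

/-- noise variance of the Piecewise Mechanism on input `t` with privacy budget `ε`. -/
noncomputable def pmVar (t ε : ℝ) : ℝ :=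
  t ^ 2 / (exp (ε / 2) - 1) + (exp (ε / 2) + 3) / (3 * (exp (ε / 2) - 1) ^ 2)

/-- noise variance of Duchi et al.'s one-dimensional mechanism on input `t`. -/
noncomputable def duchiVar (t ε : ℝ) : ℝ := ((exp ε + 1) / (exp ε - 1)) ^ 2 - t ^ 2

/-- noise variance of the Hybrid Mechanism (PM with probability `α`, Duchi with `1−α`). -/
noncomputable def hmVar (t ε α : ℝ) : ℝ := α * pmVar t ε + (1 - α) * duchiVar t ε

/-- worst-case (over `t ∈ [−1,1]`) noise variance of the Hybrid Mechanism. -/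
noncomputable def hmMaxVar (ε α : ℝ) : ℝ :=
  sSup ((fun t => hmVar t ε α) '' Set.Icc (-1 : ℝ) 1)

/-- `ε* = ln((−5 + 2·(6353 − 405√241)^{1/3} + 2·(6353 + 405√241)^{1/3}) / 27)`. -/
noncomputable def epsStar : ℝ :=
  Real.log ((-5 + 2 * (6353 - 405 * Real.sqrt 241) ^ ((1 : ℝ) / 3) +
      2 * (6353 + 405 * Real.sqrt 241) ^ ((1 : ℝ) / 3)) / 27)

/-- the optimal mixing probability `α*(ε)`. -/
noncomputable def alphaStar (ε : ℝ) : ℝ := if ε > epsStar then 1 - exp (-(ε / 2)) else 0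

lemma hmVar_lin (t ε α : ℝ) :
    hmVar t ε α = α * (pmVar t ε - duchiVar t ε) + duchiVar t ε := by
  unfold hmVar; ring

lemma hmVar_quad (t ε α : ℝ) :
    hmVar t ε α = (hmVar 1 ε α - hmVar 0 ε α) * t ^ 2 + hmVar 0 ε α := by
  unfold hmVar pmVar duchiVar; ring

lemma hmMaxVar_eq (ε α : ℝ) :
    hmMaxVar ε α = max (hmVar 1 ε α) (hmVar 0 ε α) := by
  unfold hmMaxVar
  apply IsGreatest.csSup_eq
  constructor
  · rcases le_total (hmVar 0 ε α) (hmVar 1 ε α) with h | h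
    · rw [max_eq_left h]
      exact ⟨1, by norm_num, rfl⟩
    · rw [max_eq_right h]
      exact ⟨0, by norm_num, rfl⟩
  · rintro y ⟨t, ht, rfl⟩
    simp only [Set.mem_Icc] at ht
    have h0 : 0 ≤ t ^ 2 := sq_nonneg t
    have h1 : t ^ 2 ≤ 1 := by nlinarith [ht.1, ht.2]
    show hmVar t ε α ≤ _
    rw [hmVar_quad t ε α]
    rcases le_or_gt 0 (hmVar 1 ε α - hmVar 0 ε α) with h | h
    · have : (hmVar 1 ε α - hmVar 0 ε α) * t ^ 2 + hmVar 0 ε α ≤ hmVar 1 ε α := by nlinarith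
      exact this.trans (le_max_left _ _)
    · have : (hmVar 1 ε α - hmVar 0 ε α) * t ^ 2 + hmVar 0 ε α ≤ hmVar 0 ε α := by nlinarith
      exact this.trans (le_max_right _ _)

/-- `s₀ = exp(ε*/2)` satisfies `3s₀³ − s₀² + s₀ − 7 = 0` and `s₀ > 1`. -/
lemma epsStar_cubic :
    1 < exp (epsStar / 2) ∧
      3 * exp (epsStar / 2) ^ 3 - exp (epsStar / 2) ^ 2 + exp (epsStar / 2) - 7 = 0 := by
  set A := (6353 - 405 * Real.sqrt 241) ^ ((1 : ℝ) / 3) with hAdef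
  set B := (6353 + 405 * Real.sqrt 241) ^ ((1 : ℝ) / 3) with hBdef
  have h241 : Real.sqrt 241 ^ 2 = 241 := Real.sq_sqrt (by norm_num)
  have h241' : (0 : ℝ) ≤ Real.sqrt 241 := Real.sqrt_nonneg _
  have hApos : (0 : ℝ) ≤ 6353 - 405 * Real.sqrt 241 := by nlinarith
  have hBpos : (0 : ℝ) ≤ 6353 + 405 * Real.sqrt 241 := by nlinarith
  have hA3 : A ^ 3 = 6353 - 405 * Real.sqrt 241 := by
    rw [hAdef, ← Real.rpow_natCast ((6353 - 405 * Real.sqrt 241) ^ ((1 : ℝ) / 3)) 3,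
      ← Real.rpow_mul hApos]
    norm_num
  have hB3 : B ^ 3 = 6353 + 405 * Real.sqrt 241 := by
    rw [hBdef, ← Real.rpow_natCast ((6353 + 405 * Real.sqrt 241) ^ ((1 : ℝ) / 3)) 3,
      ← Real.rpow_mul hBpos]
    norm_num
  have hA0 : 0 ≤ A := Real.rpow_nonneg hApos _
  have hB0 : 0 ≤ B := Real.rpow_nonneg hBpos _
  have hAB : A * B = 94 := by
    have h1 : A * B = ((6353 - 405 * Real.sqrt 241) * (6353 + 405 * Real.sqrt 241)) ^ ((1 : ℝ) / 3) :=
      (Real.mul_rpow hApos hBpos).symm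
    have h2 : (6353 - 405 * Real.sqrt 241) * (6353 + 405 * Real.sqrt 241) = 830584 := by
      linear_combination (-164025 : ℝ) * h241
    rw [h1, h2]
    have h3 : (830584 : ℝ) = 94 ^ (3 : ℕ) := by norm_num
    rw [h3, ← Real.rpow_natCast 94 3, ← Real.rpow_mul (by norm_num)]
    norm_num
  set u := A + B with hudef
  have hu3 : u ^ 3 = 12706 + 282 * u := by
    linear_combination hA3 + hB3 + (3 * u) * hAB
  have hu0 : 0 ≤ u := by positivity
  have hu16 : 16 < u := by nlinarith [sq_nonneg u, sq_nonneg (u - 16)]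
  have hargpos : (0 : ℝ) < (-5 + 2 * A + 2 * B) / 27 := by
    rw [hudef] at hu16; linarith
  set r := (-5 + 2 * A + 2 * B) / 27 with hrdef
  have hr1 : 1 < r := by rw [hrdef]; linarith
  have hrc : 9 * r ^ 3 + 5 * r ^ 2 - 13 * r - 49 = 0 := by
    have hru : r = (2 * u - 5) / 27 := by rw [hrdef, hudef]; ring
    rw [hru]
    linear_combination (8 / 2187 : ℝ) * hu3
  have hexp : exp epsStar = r := by
    rw [epsStar, ← hAdef, ← hBdef, ← hrdef]
    exact Real.exp_log hargpos
  set s0 := exp (epsStar / 2) with hs0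
  have hs0sq : s0 ^ 2 = r := by
    rw [hs0, pow_two, ← Real.exp_add, show epsStar / 2 + epsStar / 2 = epsStar by ring, hexp]
  have hs0pos : 0 < s0 := Real.exp_pos _
  have hs01 : 1 < s0 := by nlinarith
  refine ⟨hs01, ?_⟩
  have hsq : (s0 * (3 * r + 1)) ^ 2 = (r + 7) ^ 2 := by
    linear_combination (3 * r + 1) ^ 2 * hs0sq + hrc
  have hfac : (s0 * (3 * r + 1) - (r + 7)) * (s0 * (3 * r + 1) + (r + 7)) = 0 := by
    linear_combination hsq
  have hsum : 0 < s0 * (3 * r + 1) + (r + 7) := by nlinarith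
  rcases mul_eq_zero.mp hfac with h | h
  · linear_combination (3 * s0 - 1) * hs0sq + h
  · linarith

set_option maxHeartbeats 1000000 in
/-- `α = α*(ε)` minimizes the worst-case noise variance of the Hybrid Mechanism. -/
theorem stmt_11 (ε : ℝ) (hε : 0 < ε) (α : ℝ) (hα : α ∈ Set.Icc (0 : ℝ) 1) :
    hmMaxVar ε (alphaStar ε) ≤ hmMaxVar ε α := by
  obtain ⟨hα0, hα1⟩ := hα
  set s := exp (ε / 2) with hsdef
  have hs1 : 1 < s := Real.one_lt_exp_iff.mpr (by linarith)
  have hx : exp ε = s * s := by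
    rw [hsdef, ← Real.exp_add]; ring_nf
  have hsne : s - 1 ≠ 0 := by intro h; nlinarith
  have hsne' : s + 1 ≠ 0 := by intro h; nlinarith
  have hsne0 : s ≠ 0 := by intro h; nlinarith
  have hxne : exp ε - 1 ≠ 0 := by rw [hx]; intro h; nlinarith
  have hss : s * s - 1 ≠ 0 := by intro h; nlinarith
  obtain ⟨hs01, hs0c⟩ := epsStar_cubic
  set s0 := exp (epsStar / 2) with hs0def
  -- slope of `α ↦ hmVar 1 ε α` is nonnegative
  have hsl1 : 0 ≤ pmVar 1 ε - duchiVar 1 ε := by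
    have key : pmVar 1 ε - duchiVar 1 ε =
        4 * s * (s ^ 2 - s + 1) / (3 * (s - 1) ^ 2 * (s + 1) ^ 2) := by
      rw [pmVar, duchiVar, hx, ← hsdef]
      rw [show s * s - 1 = (s - 1) * (s + 1) by ring]
      field_simp [hss, hsne, hsne']
      ring
    rw [key]
    apply div_nonneg
    · nlinarith
    · positivity
  -- slope of `α ↦ hmVar 0 ε α`
  have hsl0 : pmVar 0 ε - duchiVar 0 ε =
      s * (-3 * s ^ 3 + s ^ 2 - s + 7) / (3 * (s - 1) ^ 2 * (s + 1) ^ 2) := by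
    rw [pmVar, duchiVar, hx, ← hsdef]
    rw [show s * s - 1 = (s - 1) * (s + 1) by ring]
    field_simp [hss, hsne, hsne']
    ring
  rw [hmMaxVar_eq ε (alphaStar ε), hmMaxVar_eq ε α]
  by_cases hcase : ε > epsStar
  · -- ε > ε* : α* = 1 − 1/s, slope0 ≤ 0
    have hst : s0 ≤ s := Real.exp_le_exp.mpr (by rw [gt_iff_lt] at hcase; linarith)
    have hNle : -3 * s ^ 3 + s ^ 2 - s + 7 ≤ 0 := by
      have hP : (0 : ℝ) ≤ 3 * (s0 ^ 2 + s0 * s + s ^ 2) - (s0 + s) + 1 := by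
        nlinarith [mul_pos (show (0:ℝ) < s0 by linarith) (show (0:ℝ) < s by linarith),
          sq_nonneg (s0 - 1), sq_nonneg (s - 1)]
      have hprod := mul_nonneg (sub_nonneg.2 hst) hP
      nlinarith [hprod, hs0c]
    have hsl0le : pmVar 0 ε - duchiVar 0 ε ≤ 0 := by
      rw [hsl0]
      apply div_nonpos_of_nonpos_of_nonneg
      · nlinarith
      · positivity
    have hαs : alphaStar ε = 1 - s⁻¹ := by
      rw [alphaStar, if_pos hcase, Real.exp_neg, ← hsdef]
    have heq10 : hmVar 1 ε (1 - s⁻¹) = hmVar 0 ε (1 - s⁻¹) := by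
      rw [hmVar, hmVar, pmVar, pmVar, duchiVar, duchiVar, hx, ← hsdef]
      field_simp [hss, hsne, hsne', hsne0]
      ring
    rw [hαs, heq10, max_self]
    rcases le_total α (1 - s⁻¹) with h | h
    · have hle : hmVar 0 ε (1 - s⁻¹) ≤ hmVar 0 ε α := by
        rw [hmVar_lin, hmVar_lin]
        nlinarith [mul_nonneg (sub_nonneg.2 h) (neg_nonneg.2 hsl0le)]
      exact hle.trans (le_max_right _ _)
    · have hle : hmVar 0 ε (1 - s⁻¹) ≤ hmVar 1 ε α := by
        rw [← heq10, hmVar_lin, hmVar_lin]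
        nlinarith [mul_nonneg (sub_nonneg.2 h) hsl1]
      exact hle.trans (le_max_left _ _)
  · -- ε ≤ ε* : α* = 0, slope0 ≥ 0
    have hεle : ε ≤ epsStar := not_lt.mp hcase
    have hst : s ≤ s0 := Real.exp_le_exp.mpr (by linarith)
    have hNge : 0 ≤ -3 * s ^ 3 + s ^ 2 - s + 7 := by
      have hP : (0 : ℝ) ≤ 3 * (s0 ^ 2 + s0 * s + s ^ 2) - (s0 + s) + 1 := by
        nlinarith [mul_pos (show (0:ℝ) < s0 by linarith) (show (0:ℝ) < s by linarith),
          sq_nonneg (s0 - 1), sq_nonneg (s - 1)]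
      have hprod := mul_nonneg (sub_nonneg.2 hst) hP
      nlinarith [hprod, hs0c]
    have hsl0ge : 0 ≤ pmVar 0 ε - duchiVar 0 ε := by
      rw [hsl0]
      apply div_nonneg
      · nlinarith
      · positivity
    have hαs : alphaStar ε = 0 := by rw [alphaStar, if_neg hcase]
    rw [hαs]
    have hv1 : hmVar 1 ε 0 = duchiVar 1 ε := by rw [hmVar_lin]; ring
    have hv0 : hmVar 0 ε 0 = duchiVar 0 ε := by rw [hmVar_lin]; ring
    have hd : duchiVar 1 ε ≤ duchiVar 0 ε := by
      rw [duchiVar, duchiVar]; norm_num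
    have hkey : duchiVar 0 ε ≤ hmVar 0 ε α := by
      rw [hmVar_lin]
      nlinarith [mul_nonneg hα0 hsl0ge]
    apply max_le
    · rw [hv1]
      exact (hd.trans hkey).trans (le_max_right _ _)
    · rw [hv0]
      exact hkey.trans (le_max_right _ _)
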